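/- Let $k$ be a field of characteristic $p > 0$. Then the polynomials $f(t) = t^{p^2}$ and $g(t) = t^{p(p+1)} + t$ satisfy $k[f(t), g(t)] = k[t]$, i.e., every polynomial in $k[t]$ can be written as a polynomial in $f(t)$ and $g(t)$ with coefficients in $k$. -/

import Mathlib

open Polynomial

/-- Let `k` be a field of characteristic `p > 0`. Then the polynomials
`f(t) = t^(p^2)` and `g(t) = t^(p(p+1)) + t` generate the polynomial ring `k[t]` as a
`k`-algebra, i.e. `k[f, g] = k[t]`. -/
theorem stmt_0 (k : Type*) [Field k] (p : ℕ) (hp : 0 < p) [CharP k p] :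
    Algebra.adjoin k {(X ^ p ^ 2 : k[X]), X ^ (p * (p + 1)) + X} = ⊤ := by
  haveI : NeZero p := ⟨hp.ne'⟩
  haveI : Fact p.Prime := CharP.char_is_prime_of_pos k p
  haveI : CharP k[X] p := charP_of_injective_algebraMap' (A := k[X]) k p
  set A := Algebra.adjoin k {(X ^ p ^ 2 : k[X]), X ^ (p * (p + 1)) + X} with hA
  have hf : (X ^ p ^ 2 : k[X]) ∈ A := Algebra.subset_adjoin (by simp)
  have hg : (X ^ (p * (p + 1)) + X : k[X]) ∈ A := Algebra.subset_adjoin (by simp)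
  have hXp : (X : k[X]) ^ p ∈ A := by
    have key : (X ^ (p * (p + 1)) + X : k[X]) ^ p - (X ^ p ^ 2) ^ (p + 1) = X ^ p := by
      rw [add_pow_char, ← pow_mul, ← pow_mul]
      ring_nf
    have := A.sub_mem (A.pow_mem hg p) (A.pow_mem hf (p + 1))
    rwa [key] at this
  have hX : (X : k[X]) ∈ A := by
    have key : (X ^ (p * (p + 1)) + X : k[X]) - (X ^ p) ^ (p + 1) = X := by
      rw [← pow_mul]; ring
    have := A.sub_mem hg (A.pow_mem hXp (p + 1))
    rwa [key] at this
  rw [eq_top_iff, ← Polynomial.adjoin_X (R := k)]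
  exact Algebra.adjoin_le (by simpa using hX)
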